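/- arXiv:2402.16818 — 5 statements merged into one kernel-verified Lean document; each statement's English description precedes it below -/
import Mathlib

section
/- Let F be a graph on k vertices, v ∈ V(F), t ≥ 1, and let H be the graph obtained from F by adding t−1 new copies of v (each new vertex adjacent to exactly the neighbors of v, and the copies of v pairwise nonadjacent). If G is an n-vertex graph in which the number of ordered copies of F equals x · n^{k−1} with x ≥ 4t, then the number of ordered copies of H in G is at least (1/2^t) · x^t · n^{k−1}. -/
open SimpleGraph Finset

/-- The number of labelled (ordered) copies of `F` in `G`: injective maps sending edges to edges. -/
noncomputable def labelledCopyCount {α β : Type*} (F : SimpleGraph α) (G : SimpleGraph β) : ℕ :=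
  Nat.card {f : α ↪ β // ∀ a b, F.Adj a b → G.Adj (f a) (f b)}

/-- The graph obtained from `F` by adding `t` new copies of the vertex `v`: each new
vertex is adjacent exactly to the neighbours of `v`, and the new vertices (together with `v`)
are pairwise nonadjacent. -/
def addCopies {α : Type*} (F : SimpleGraph α) (v : α) (t : ℕ) : SimpleGraph (α ⊕ Fin t) where
  Adj x y :=
    match x, y with
    | Sum.inl a, Sum.inl b => F.Adj a b
    | Sum.inl a, Sum.inr _ => F.Adj a v
    | Sum.inr _, Sum.inl b => F.Adj v b
    | Sum.inr _, Sum.inr _ => False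
  symm := by
    refine ⟨?_⟩
    rintro (a | i) (b | j) h
    · exact h.symm
    · exact h.symm
    · exact h.symm
    · exact h.elim
  loopless := by
    refine ⟨?_⟩
    rintro (a | i) h
    · exact F.irrefl h
    · exact h

section Aux

variable {α : Type*} (F : SimpleGraph α) (v : α) {n : ℕ} (G : SimpleGraph (Fin n))

@[simp] lemma addCopies_adj_inl_inl {s : ℕ} {a b : α} :
    (addCopies F v s).Adj (Sum.inl a) (Sum.inl b) ↔ F.Adj a b := Iff.rfl

@[simp] lemma addCopies_adj_inl_inr {s : ℕ} {a : α} {j : Fin s} :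
    (addCopies F v s).Adj (Sum.inl a) (Sum.inr j) ↔ F.Adj a v := Iff.rfl

@[simp] lemma addCopies_adj_inr_inl {s : ℕ} {b : α} {j : Fin s} :
    (addCopies F v s).Adj (Sum.inr j) (Sum.inl b) ↔ F.Adj v b := Iff.rfl

@[simp] lemma addCopies_adj_inr_inr {s : ℕ} {i j : Fin s} :
    (addCopies F v s).Adj (Sum.inr i) (Sum.inr j) ↔ False := Iff.rfl

variable [DecidableEq α]

/-- Extend a partial embedding (defined away from `v`) by the value `u` at `v`. -/
def extMap (w : {a : α // a ≠ v} ↪ Fin n) (u : Fin n) (a : α) : Fin n :=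
  if h : a = v then u else w ⟨a, h⟩

lemma extMap_apply_ne (w : {a : α // a ≠ v} ↪ Fin n) (u : Fin n) {a : α} (h : a ≠ v) :
    extMap v w u a = w ⟨a, h⟩ := dif_neg h

lemma extMap_apply_v (w : {a : α // a ≠ v} ↪ Fin n) (u : Fin n) :
    extMap v w u v = u := dif_pos rfl

/-- The set of good extensions of `w` to an `F`-copy. -/
def goodSet (w : {a : α // a ≠ v} ↪ Fin n) : Set (Fin n) :=
  {u | Function.Injective (extMap v w u) ∧
    ∀ a b, F.Adj a b → G.Adj (extMap v w u a) (extMap v w u b)}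

/-- Restriction of an embedding of `α` to `α ∖ {v}`. -/
def restrictEmb (f : α ↪ Fin n) : {a : α // a ≠ v} ↪ Fin n :=
  ⟨fun a => f a.1, fun a b h => Subtype.ext (f.injective h)⟩

lemma extMap_restrict (f : α ↪ Fin n) (u : Fin n) (hu : u = f v) :
    extMap v (restrictEmb v f) u = ⇑f := by
  funext a
  by_cases h : a = v
  · subst h; rw [extMap_apply_v, hu]
  · rw [extMap_apply_ne v _ _ h]; rfl

/-- Copies of `F` correspond to pairs: a partial embedding plus a good extension. -/
noncomputable def copiesEquivF :
    {f : α ↪ Fin n // ∀ a b, F.Adj a b → G.Adj (f a) (f b)} ≃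
      Σ w : {a : α // a ≠ v} ↪ Fin n, goodSet F v G w where
  toFun f := ⟨restrictEmb v f.1, f.1 v, by
    constructor
    · rw [extMap_restrict v f.1 _ rfl]; exact f.1.injective
    · intro a b hab; rw [extMap_restrict v f.1 _ rfl]; exact f.2 a b hab⟩
  invFun p := ⟨⟨extMap v p.1 p.2.1, p.2.2.1⟩, p.2.2.2⟩
  left_inv f := by
    apply Subtype.ext
    apply DFunLike.ext
    intro a
    show extMap v (restrictEmb v f.1) (f.1 v) a = f.1 a
    rw [extMap_restrict v f.1 _ rfl]
  right_inv p := by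
    rcases p with ⟨w, u, hu⟩
    apply Sigma.subtype_ext
    · apply DFunLike.ext
      intro a
      show extMap v w u a.1 = w a
      rw [extMap_apply_ne v w u a.2]
    · exact extMap_apply_v v w u

/-- The standard inclusion `Fin (s+1) → α ⊕ Fin s`, sending `0` to `v`. -/
def toSum (s : ℕ) : Fin (s + 1) → α ⊕ Fin s :=
  Fin.cases (Sum.inl v) Sum.inr

lemma toSum_injective (s : ℕ) : Function.Injective (toSum (α := α) v s) := by
  intro i j h
  induction i using Fin.cases <;> induction j using Fin.cases <;>
    simp [toSum] at h ⊢ <;> simp_all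

/-- Re-assemble an embedding of `α ⊕ Fin s` from a partial embedding and
an ordered `(s+1)`-tuple of extensions. -/
def unext {s : ℕ} (w : {a : α // a ≠ v} ↪ Fin n) (m : Fin (s + 1) ↪ Fin n) :
    α ⊕ Fin s → Fin n
  | .inl a => extMap v w (m 0) a
  | .inr j => m j.succ

/-- Copies of `addCopies F v s` correspond to pairs: a partial embedding plus an
ordered `(s+1)`-tuple of distinct good extensions. -/
noncomputable def copiesEquivH (s : ℕ) :
    {h : (α ⊕ Fin s) ↪ Fin n // ∀ a b, (addCopies F v s).Adj a b → G.Adj (h a) (h b)} ≃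
      Σ w : {a : α // a ≠ v} ↪ Fin n,
        {m : Fin (s + 1) ↪ Fin n // ∀ i, m i ∈ goodSet F v G w} where
  toFun h := by
    refine ⟨restrictEmb v (Function.Embedding.inl.trans h.1),
      ⟨fun i => h.1 (toSum v s i), fun i j hij => toSum_injective v s (h.1.injective hij)⟩,
      ?_⟩
    intro i
    change h.1 (toSum v s i) ∈ goodSet F v G _
    induction i using Fin.cases with
    | zero =>
      have he : extMap v (restrictEmb v (Function.Embedding.inl.trans h.1))
          (h.1 (toSum v s 0)) = fun a => h.1 (Sum.inl a) := by
        have : h.1 (toSum v s 0) = h.1 (Sum.inl v) := by simp [toSum]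
        rw [this]
        exact extMap_restrict v (Function.Embedding.inl.trans h.1) _ rfl
      constructor
      · rw [he]
        intro a b hab
        exact Sum.inl_injective (h.1.injective hab)
      · intro a b hab
        rw [he]
        exact h.2 (Sum.inl a) (Sum.inl b) hab
    | succ j =>
      have hts : toSum v s j.succ = Sum.inr j := by simp [toSum]
      rw [hts]
      have he : ∀ a : α, extMap v (restrictEmb v (Function.Embedding.inl.trans h.1))
          (h.1 (Sum.inr j)) a = h.1 (if ha : a = v then Sum.inr j else Sum.inl a) := by
        intro a
        by_cases ha : a = v
        · subst ha; rw [extMap_apply_v, dif_pos rfl]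
        · rw [extMap_apply_ne v _ _ ha, dif_neg ha]; rfl
      constructor
      · intro a b hab
        rw [he, he] at hab
        have := h.1.injective hab
        by_cases ha : a = v <;> by_cases hb : b = v <;>
          simp [ha, hb] at this ⊢ <;> simp_all
      · intro a b hab
        rw [he, he]
        have ha : a = v → b ≠ v := by
          rintro rfl rfl
          exact F.loopless.irrefl _ hab
        by_cases h1 : a = v
        · rw [dif_pos h1, dif_neg (ha h1)]
          rw [h1] at hab
          exact h.2 _ _ hab
        · by_cases h2 : b = v
          · rw [dif_neg h1, dif_pos h2]
            rw [h2] at hab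
            exact h.2 _ _ hab
          · rw [dif_neg h1, dif_neg h2]
            exact h.2 _ _ (by simpa using hab)
  invFun p := by
    rcases p with ⟨w, m, hm⟩
    refine ⟨⟨unext v w m, ?_⟩, ?_⟩
    · rintro (a | i) (b | j) hab
      · exact congrArg Sum.inl ((hm 0).1 hab)
      · exfalso
        by_cases ha : a = v
        · rw [ha, show unext v w m (Sum.inl v) = m 0 from extMap_apply_v v w (m 0)] at hab
          exact (Fin.succ_ne_zero j).symm (m.injective hab)
        · rw [show unext v w m (Sum.inl a) = w ⟨a, ha⟩ from extMap_apply_ne v w (m 0) ha] at hab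
          have h1 : extMap v w (m j.succ) a = extMap v w (m j.succ) v := by
            rw [extMap_apply_ne v w _ ha, extMap_apply_v]
            exact hab
          exact ha ((hm j.succ).1 h1)
      · exfalso
        by_cases hb : b = v
        · rw [hb, show unext v w m (Sum.inl v) = m 0 from extMap_apply_v v w (m 0)] at hab
          exact (Fin.succ_ne_zero i) (m.injective hab)
        · rw [show unext v w m (Sum.inl b) = w ⟨b, hb⟩ from extMap_apply_ne v w (m 0) hb] at hab
          have h1 : extMap v w (m i.succ) b = extMap v w (m i.succ) v := by
            rw [extMap_apply_ne v w _ hb, extMap_apply_v]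
            exact hab.symm
          exact hb ((hm i.succ).1 h1)
      · exact congrArg Sum.inr (Fin.succ_injective s (m.injective hab))
    · rintro (a | i) (b | j) hab
      · exact (hm 0).2 a b hab
      · show G.Adj (extMap v w (m 0) a) (m j.succ)
        have ha : a ≠ v := fun h1 => F.loopless.irrefl v (h1 ▸ hab)
        have := (hm j.succ).2 a v (by simpa using hab)
        rw [extMap_apply_v, extMap_apply_ne v w _ ha] at this
        rw [extMap_apply_ne v w _ ha]
        exact this
      · show G.Adj (m i.succ) (extMap v w (m 0) b)
        have hb : b ≠ v := fun h1 => F.loopless.irrefl v (h1 ▸ hab)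
        have := (hm i.succ).2 v b (by simpa using hab)
        rw [extMap_apply_v, extMap_apply_ne v w _ hb] at this
        rw [extMap_apply_ne v w _ hb]
        exact this
      · exact hab.elim
  left_inv h := by
    apply Subtype.ext
    apply DFunLike.ext
    rintro (a | j)
    · show extMap v (restrictEmb v (Function.Embedding.inl.trans h.1)) (h.1 (toSum v s 0)) a
        = h.1 (Sum.inl a)
      have : h.1 (toSum v s 0) = h.1 (Sum.inl v) := by simp [toSum]
      rw [this, extMap_restrict v (Function.Embedding.inl.trans h.1) (h.1 (Sum.inl v)) rfl]
      rfl
    · show h.1 (toSum v s j.succ) = h.1 (Sum.inr j)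
      simp [toSum]
  right_inv p := by
    rcases p with ⟨w, m, hm⟩
    apply Sigma.subtype_ext
    · apply DFunLike.ext
      intro a
      show unext v w m (Sum.inl a.1) = w a
      rw [show unext v w m (Sum.inl a.1) = _ from extMap_apply_ne v w (m 0) a.2]
    · apply DFunLike.ext
      intro i
      induction i using Fin.cases with
      | zero =>
        show unext v w m (toSum v s 0) = m 0
        have : toSum (α := α) v s 0 = Sum.inl v := by simp [toSum]
        rw [this]
        exact extMap_apply_v v w (m 0)
      | succ j =>
        show unext v w m (toSum v s j.succ) = m j.succ
        have : toSum (α := α) v s j.succ = Sum.inr j := by simp [toSum]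
        rw [this]
        rfl

/-- Tuples valued in a set correspond to embeddings into the set. -/
def tupleEquiv {ι β : Type*} (S : Set β) :
    {m : ι ↪ β // ∀ i, m i ∈ S} ≃ (ι ↪ S) where
  toFun m := ⟨fun i => ⟨m.1 i, m.2 i⟩, fun i j h => m.1.injective (congrArg Subtype.val h)⟩
  invFun e := ⟨e.trans (Function.Embedding.subtype _), fun i => (e i).2⟩
  left_inv m := rfl
  right_inv e := rfl

end Aux

/-- The key analytic inequality (convexity / Jensen). -/
lemma key_ineq {ι : Type*} [Fintype ι] (d : ι → ℕ) (t : ℕ) (ht : 1 ≤ t) (x N : ℝ)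
    (hN : 0 ≤ N) (hM : (Fintype.card ι : ℝ) ≤ N) (hx : 4 * t ≤ x)
    (hsum : (∑ i, (d i : ℝ)) = x * N) :
    (1 / 2 ^ t) * x ^ t * N ≤ ∑ i, ((d i).descFactorial t : ℝ) := by
  have ht0 : (1 : ℝ) ≤ t := by exact_mod_cast ht
  have hx0 : (0 : ℝ) < x := by nlinarith
  rcases eq_or_lt_of_le hN with hN0 | hN0
  · rw [← hN0]
    rw [mul_zero]
    exact Finset.sum_nonneg fun i _ => by positivity
  set e : ι → ℝ := fun i => max ((d i : ℝ) - t) 0 with he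
  have he0 : ∀ i, 0 ≤ e i := fun i => le_max_right _ _
  have hdesc : ∀ i, e i ^ t ≤ ((d i).descFactorial t : ℝ) := by
    intro i
    by_cases htm : t ≤ d i
    · have h1 : e i = (d i : ℝ) - t := max_eq_left (by
        have : (t : ℝ) ≤ (d i : ℝ) := by exact_mod_cast htm
        linarith)
      have h2 : (0 : ℝ) ≤ (d i : ℝ) - t := by
        have : (t : ℝ) ≤ (d i : ℝ) := by exact_mod_cast htm
        linarith
      rw [h1, Nat.descFactorial_eq_prod_range, Nat.cast_prod,
        show ((d i : ℝ) - t) ^ t = ∏ _j ∈ Finset.range t, ((d i : ℝ) - t) by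
          rw [Finset.prod_const, Finset.card_range]]
      refine Finset.prod_le_prod (fun j _ => h2) fun j hj => ?_
      rw [Finset.mem_range] at hj
      have hjd : j ≤ d i := le_trans (le_of_lt hj) htm
      rw [Nat.cast_sub hjd]
      have : (j : ℝ) ≤ (t : ℝ) := by exact_mod_cast le_of_lt hj
      linarith
    · have h1 : e i = 0 := max_eq_right (by
        have : (d i : ℝ) < (t : ℝ) := by exact_mod_cast Nat.lt_of_not_le htm
        linarith)
      rw [h1, zero_pow (by omega)]
      positivity
  have hcard : 0 < Fintype.card ι := by
    rcases Nat.eq_zero_or_pos (Fintype.card ι) with h | h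
    · exfalso
      have : IsEmpty ι := Fintype.card_eq_zero_iff.mp h
      rw [Finset.univ_eq_empty, Finset.sum_empty] at hsum
      nlinarith
    · exact h
  have hcardR : (0 : ℝ) < Fintype.card ι := by exact_mod_cast hcard
  have hsum_e : (x - t) * N ≤ ∑ i, e i := by
    have h1 : ∑ i, ((d i : ℝ) - t) ≤ ∑ i, e i :=
      Finset.sum_le_sum fun i _ => le_max_left _ _
    rw [Finset.sum_sub_distrib, Finset.sum_const, hsum] at h1
    have h2 : (t : ℝ) * (Fintype.card ι) ≤ t * N :=
      mul_le_mul_of_nonneg_left hM (by positivity)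
    rw [Finset.card_univ, nsmul_eq_mul] at h1
    nlinarith
  have hxtN : 0 ≤ (x - t) * N := by nlinarith
  have hpow := pow_sum_div_card_le_sum_pow (s := (Finset.univ : Finset ι)) (f := e)
      (fun i _ => he0 i) (t - 1)
  rw [Nat.sub_add_cancel ht, Finset.card_univ] at hpow
  have hstep : (x - t) ^ t * N ≤ (∑ i, e i) ^ t / (Fintype.card ι : ℝ) ^ (t - 1) := by
    rw [le_div_iff₀ (by positivity)]
    have hNt : N * N ^ (t - 1) = N ^ t := by
      rw [← pow_succ']
      congr 1
      omega
    calc (x - t) ^ t * N * (Fintype.card ι : ℝ) ^ (t - 1)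
        ≤ (x - t) ^ t * N * N ^ (t - 1) := by
          refine mul_le_mul_of_nonneg_left (pow_le_pow_left₀ (by positivity) hM _) ?_
          have hxt : 0 ≤ x - t := by nlinarith
          positivity
      _ = ((x - t) * N) ^ t := by rw [mul_assoc, hNt, mul_pow]
      _ ≤ (∑ i, e i) ^ t := pow_le_pow_left₀ hxtN hsum_e _
  have hfinal : (∑ i, e i ^ t) ≤ ∑ i, ((d i).descFactorial t : ℝ) :=
    Finset.sum_le_sum fun i _ => hdesc i
  have hhalf : (1 / 2 ^ t) * x ^ t * N ≤ (x - t) ^ t * N := by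
    have h1 : (1 / 2 ^ t) * x ^ t = (x / 2) ^ t := by
      rw [div_pow]; ring
    rw [h1]
    refine mul_le_mul_of_nonneg_right (pow_le_pow_left₀ (by positivity) (by nlinarith) _) ?_
    positivity
  calc (1 / 2 ^ t) * x ^ t * N ≤ (x - t) ^ t * N := hhalf
    _ ≤ (∑ i, e i) ^ t / (Fintype.card ι : ℝ) ^ (t - 1) := hstep
    _ ≤ ∑ i, e i ^ t := hpow
    _ ≤ _ := hfinal

/-- Lemma 2.2: if `F` has `k` vertices, `H` is obtained from `F` by adding `t - 1` new
copies of a vertex `v`, and an `n`-vertex graph `G` contains `x ⬝ n^(k-1)` ordered copies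
of `F` with `x ≥ 4t`, then `G` contains at least `x^t ⬝ n^(k-1) / 2^t` ordered copies
of `H`. -/
theorem labelledCopyCount_addCopies_lower {α : Type*} [Fintype α]
    (F : SimpleGraph α) (v : α) (t : ℕ) (ht : 1 ≤ t) (n k : ℕ)
    (hk : Fintype.card α = k) (G : SimpleGraph (Fin n)) (x : ℝ)
    (hx : 4 * t ≤ x)
    (hF : (_root_.labelledCopyCount F G : ℝ) = x * (n : ℝ) ^ (k - 1)) :
    (1 / 2 ^ t) * x ^ t * (n : ℝ) ^ (k - 1) ≤
      (_root_.labelledCopyCount (addCopies F v (t - 1)) G : ℝ) := by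
  classical
  letI : Fintype {a : α // a ≠ v} := Fintype.ofFinite _
  letI : Fintype ({a : α // a ≠ v} ↪ Fin n) := Fintype.ofFinite _
  letI : ∀ w : {a : α // a ≠ v} ↪ Fin n, Fintype (goodSet F v G w) :=
    fun w => Fintype.ofFinite _
  obtain ⟨s, rfl⟩ : ∃ s, t = s + 1 := ⟨t - 1, by omega⟩
  rw [show s + 1 - 1 = s from rfl]
  have hk1 : 1 ≤ k := by
    rw [← hk]
    exact Fintype.card_pos_iff.mpr ⟨v⟩
  have hγ : Fintype.card {a : α // a ≠ v} = k - 1 := by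
    rw [← hk]
    simp [Fintype.card_subtype_compl]
  set d : ({a : α // a ≠ v} ↪ Fin n) → ℕ := fun w => Fintype.card (goodSet F v G w) with hd
  have h1 : _root_.labelledCopyCount F G = ∑ w : {a : α // a ≠ v} ↪ Fin n, d w := by
    rw [_root_.labelledCopyCount, Nat.card_congr (copiesEquivF F v G), Nat.card_eq_fintype_card,
      Fintype.card_sigma]
  have h2 : _root_.labelledCopyCount (addCopies F v s) G
      = ∑ w : {a : α // a ≠ v} ↪ Fin n, (d w).descFactorial (s + 1) := by
    rw [_root_.labelledCopyCount, Nat.card_congr ((copiesEquivH F v G s).trans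
      (Equiv.sigmaCongrRight fun w => tupleEquiv (goodSet F v G w))),
      Nat.card_eq_fintype_card, Fintype.card_sigma]
    refine Finset.sum_congr rfl fun w _ => ?_
    rw [Fintype.card_embedding_eq, Fintype.card_fin]
  have hM : ((Fintype.card ({a : α // a ≠ v} ↪ Fin n)) : ℝ) ≤ (n : ℝ) ^ (k - 1) := by
    rw [Fintype.card_embedding_eq, Fintype.card_fin, hγ]
    calc ((n.descFactorial (k - 1) : ℕ) : ℝ) ≤ ((n ^ (k - 1) : ℕ) : ℝ) := by
          exact_mod_cast Nat.descFactorial_le_pow n (k - 1)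
      _ = (n : ℝ) ^ (k - 1) := by push_cast; ring
  have hsum : (∑ w : {a : α // a ≠ v} ↪ Fin n, (d w : ℝ)) = x * (n : ℝ) ^ (k - 1) := by
    rw [← hF, h1]
    push_cast
    ring
  rw [h2]
  push_cast
  exact key_ineq d (s + 1) (by omega) x _ (by positivity) hM hx hsum
end

section
/- For every r ≥ 3 and positive integers s_1 ≤ s_2 ≤ … ≤ s_r, ex(n, K_r, K_{s_1,…,s_r}) ≥ ⌊n/2⌋ · ex(⌈n/2⌉, K_{r−1}, K_{s_1,…,s_{r−1}}). -/
open SimpleGraph Finset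

/-- `G` is `H`-free: there is no copy of `H` in `G` as a subgraph. -/
def Free {α β : Type*} (H : SimpleGraph α) (G : SimpleGraph β) : Prop :=
  ¬ ∃ f : α ↪ β, ∀ a b, H.Adj a b → G.Adj (f a) (f b)

/-- Number of (unordered) copies of `F` in `G`: subgraphs of `G` isomorphic to `F`. -/
noncomputable def copyCount {α β : Type*} (F : SimpleGraph α) (G : SimpleGraph β) : ℕ :=
  Nat.card {H : G.Subgraph // Nonempty (H.coe ≃g F)}

/-- The generalized Turán number: maximum number of copies of `F` in an `n`-vertex
`H`-free graph. -/
noncomputable def exGen {α β : Type*} (n : ℕ) (F : SimpleGraph α) (H : SimpleGraph β) : ℕ :=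
  sSup {N | ∃ G : SimpleGraph (Fin n), _root_.Free H G ∧ copyCount F G = N}

/-- The complete multipartite graph with `r` parts of sizes `s 0, …, s (r-1)`. -/
def multipartite (r : ℕ) (s : Fin r → ℕ) : SimpleGraph (Σ i : Fin r, Fin (s i)) :=
  completeMultipartiteGraph fun i => Fin (s i)

/- ### Auxiliary material -/

lemma multipartite_adj {r : ℕ} {s : Fin r → ℕ} {x y : Σ i : Fin r, Fin (s i)} :
    (multipartite r s).Adj x y ↔ x.1 ≠ y.1 := Iff.rfl

instance subgraphFinite {V : Type*} [Finite V] (G : SimpleGraph V) : Finite G.Subgraph :=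
  Finite.of_injective (fun H => (H.verts, H.Adj)) (by
    intro a b h
    simp only [Prod.mk.injEq] at h
    exact SimpleGraph.Subgraph.ext h.1 h.2)

lemma copyCount_le_exGen {α β : Type*} {n : ℕ} {F : SimpleGraph α} {H : SimpleGraph β}
    {G : SimpleGraph (Fin n)} (hfree : _root_.Free H G) : _root_.copyCount F G ≤ exGen n F H := by
  apply le_csSup
  · refine ⟨Nat.card (Set (Fin n) × (Fin n → Fin n → Prop)), ?_⟩
    rintro N ⟨G', -, rfl⟩
    exact Nat.card_le_card_of_injective
      (fun K => (K.val.verts, K.val.Adj)) (by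
        intro a b h
        simp only [Prod.mk.injEq] at h
        exact Subtype.ext (SimpleGraph.Subgraph.ext h.1 h.2))
  · exact ⟨G, hfree, rfl⟩

lemma exGen_mem {α β : Type*} {n : ℕ} {F : SimpleGraph α} {H : SimpleGraph β}
    (hne : ∃ G : SimpleGraph (Fin n), _root_.Free H G) :
    ∃ G : SimpleGraph (Fin n), _root_.Free H G ∧ _root_.copyCount F G = exGen n F H := by
  obtain ⟨G, hG⟩ := hne
  have hmem : exGen n F H ∈ {N | ∃ G : SimpleGraph (Fin n), _root_.Free H G ∧ _root_.copyCount F G = N} := by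
    refine Nat.sSup_mem ⟨_root_.copyCount F G, G, hG, rfl⟩ ?_
    refine ⟨Nat.card (Set (Fin n) × (Fin n → Fin n → Prop)), ?_⟩
    rintro N ⟨G', -, rfl⟩
    exact Nat.card_le_card_of_injective
      (fun K => (K.val.verts, K.val.Adj)) (by
        intro a b h
        simp only [Prod.mk.injEq] at h
        exact Subtype.ext (SimpleGraph.Subgraph.ext h.1 h.2))
  exact hmem

/-- The join of two graphs: all cross edges are present. -/
def joinGraph {α β : Type*} (G₁ : SimpleGraph α) (G₂ : SimpleGraph β) :
    SimpleGraph (α ⊕ β) where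
  Adj x y := match x, y with
    | .inl a, .inl b => G₁.Adj a b
    | .inr a, .inr b => G₂.Adj a b
    | _, _ => True
  symm := ⟨by rintro (a|a) (b|b) h <;> first | trivial | exact h.symm⟩
  loopless := ⟨by rintro (a|a) h <;> exact h.ne rfl⟩

@[simp] lemma joinGraph_adj_inr_inr {α β : Type*} {G₁ : SimpleGraph α} {G₂ : SimpleGraph β}
    {a b : β} : (joinGraph G₁ G₂).Adj (.inr a) (.inr b) ↔ G₂.Adj a b := Iff.rfl

lemma complete_subgraph_adj {V α : Type*} {G : SimpleGraph V} {H : G.Subgraph}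
    (φ : H.coe ≃g (⊤ : SimpleGraph α)) (a b : V) :
    H.Adj a b ↔ a ≠ b ∧ a ∈ H.verts ∧ b ∈ H.verts := by
  constructor
  · intro h; exact ⟨h.ne, h.fst_mem, h.snd_mem⟩
  · rintro ⟨hne, ha, hb⟩
    have hx : H.coe.Adj ⟨a, ha⟩ ⟨b, hb⟩ := by
      rw [← φ.map_rel_iff]
      exact fun h => hne (by simpa using congrArg Subtype.val (φ.toEquiv.injective h))
    exact hx

lemma free_join (r : ℕ) (hr : 3 ≤ r) (s : Fin r → ℕ) (hmono : Monotone s)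
    {k m : ℕ} (G₀ : SimpleGraph (Fin k))
    (h0 : _root_.Free (multipartite (r - 1) fun i => s (i.castLE (Nat.sub_le r 1))) G₀) :
    _root_.Free (multipartite r s) (joinGraph (⊥ : SimpleGraph (Fin m)) G₀) := by
  rintro ⟨f, hf⟩
  have key : ∃ j : Fin r, ∀ x : (Σ i : Fin r, Fin (s i)), x.1 ≠ j → (f x).isRight := by
    by_cases hL : ∃ x : (Σ i : Fin r, Fin (s i)), ¬ (f x).isRight
    · obtain ⟨x₀, hx₀⟩ := hL
      refine ⟨x₀.1, fun x hx => ?_⟩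
      by_contra hx'
      obtain ⟨a₀, ha₀⟩ : ∃ a, f x₀ = Sum.inl a := by
        cases h : f x₀ with
        | inl a => exact ⟨a, rfl⟩
        | inr a => exact absurd (by simp [h]) hx₀
      obtain ⟨a₁, ha₁⟩ : ∃ a, f x = Sum.inl a := by
        cases h : f x with
        | inl a => exact ⟨a, rfl⟩
        | inr a => exact absurd (by simp [h]) hx'
      have hadj := hf x x₀ hx
      rw [ha₀, ha₁] at hadj
      exact hadj
    · push_neg at hL
      exact ⟨⟨0, by omega⟩, fun x _ => hL x⟩
  obtain ⟨j, hj⟩ := key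
  set ι : Fin (r - 1) → Fin r := fun i =>
    if h : (i : ℕ) < (j : ℕ) then ⟨i, by omega⟩ else ⟨i + 1, by omega⟩ with hι
  have hιne : ∀ i, ι i ≠ j := by
    intro i
    simp only [hι]
    split <;> (intro h; rw [Fin.ext_iff] at h; simp at h; omega)
  have hιinj : Function.Injective ι := by
    intro a b h
    simp only [hι] at h
    split at h <;> split at h <;> (rw [Fin.ext_iff] at h ⊢; simp at h ⊢ <;> omega)
  have hιge : ∀ i : Fin (r - 1), (i : ℕ) ≤ (ι i : ℕ) := by
    intro i; simp only [hι]; split <;> simp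
  have hs : ∀ i : Fin (r - 1), s (i.castLE (Nat.sub_le r 1)) ≤ s (ι i) := by
    intro i
    exact hmono (by rw [Fin.le_def]; simpa using hιge i)
  have hexr : ∀ x : (Σ i : Fin (r-1), Fin (s (i.castLE (Nat.sub_le r 1)))),
      ∃ b, f ⟨ι x.1, Fin.castLE (hs x.1) x.2⟩ = Sum.inr b := by
    intro x
    have := hj ⟨ι x.1, Fin.castLE (hs x.1) x.2⟩ (hιne x.1)
    cases h : f ⟨ι x.1, Fin.castLE (hs x.1) x.2⟩ with
    | inl a => rw [h] at this; exact absurd this (by simp)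
    | inr b => exact ⟨b, rfl⟩
  choose g hg using hexr
  have hginj : Function.Injective g := by
    rintro ⟨i₁, a₁⟩ ⟨i₂, a₂⟩ h
    have hfeq : f ⟨ι i₁, Fin.castLE (hs i₁) a₁⟩ = f ⟨ι i₂, Fin.castLE (hs i₂) a₂⟩ := by
      rw [hg ⟨i₁, a₁⟩, hg ⟨i₂, a₂⟩, h]
    have heq := f.injective hfeq
    have h1 : i₁ = i₂ := hιinj (congrArg Sigma.fst heq)
    subst h1
    have h2 := eq_of_heq (Sigma.mk.inj_iff.mp heq).2
    exact congrArg _ (Fin.castLE_injective _ h2)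
  have hgadj : ∀ x y, (multipartite (r-1) fun i => s (i.castLE (Nat.sub_le r 1))).Adj x y →
      G₀.Adj (g x) (g y) := by
    rintro ⟨i₁, a₁⟩ ⟨i₂, a₂⟩ hxy
    have hne : ι i₁ ≠ ι i₂ := fun h => hxy (hιinj h)
    have hadj := hf ⟨ι i₁, Fin.castLE (hs i₁) a₁⟩ ⟨ι i₂, Fin.castLE (hs i₂) a₂⟩ hne
    rw [hg ⟨i₁, a₁⟩, hg ⟨i₂, a₂⟩] at hadj
    exact hadj
  exact h0 ⟨⟨g, hginj⟩, hgadj⟩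

lemma free_comap {α β γ : Type*} (H : SimpleGraph α) (G : SimpleGraph β) (e : γ ≃ β)
    (h : _root_.Free H G) : _root_.Free H (SimpleGraph.comap e G) := by
  rintro ⟨f, hf⟩
  exact h ⟨f.trans e.toEmbedding, fun a b hab => hf a b hab⟩

lemma count_key (r r' : ℕ) (hr : r = r' + 1) {k m n : ℕ} (G₀ : SimpleGraph (Fin k))
    (e : Fin n ≃ (Fin m ⊕ Fin k)) :
    m * _root_.copyCount (⊤ : SimpleGraph (Fin r')) G₀ ≤
      _root_.copyCount (⊤ : SimpleGraph (Fin r))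
        (SimpleGraph.comap e (joinGraph (⊥ : SimpleGraph (Fin m)) G₀)) := by
  subst hr
  classical
  set J := joinGraph (⊥ : SimpleGraph (Fin m)) G₀ with hJ
  set G' := SimpleGraph.comap e J with hG'
  set T : Fin m → G₀.Subgraph → Set (Fin m ⊕ Fin k) :=
    fun v H => {Sum.inl v} ∪ Sum.inr '' H.verts with hT
  have hmemT : ∀ v (H : G₀.Subgraph) (b : Fin k), Sum.inr b ∈ T v H ↔ b ∈ H.verts := by
    intro v H b; simp [hT]
  have hmemTl : ∀ v (H : G₀.Subgraph) (a : Fin m), Sum.inl a ∈ T v H ↔ a = v := by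
    intro v H a; simp [hT, eq_comm]
  have hadj_sub : ∀ (v : Fin m) (H : G₀.Subgraph), Nonempty (H.coe ≃g (⊤ : SimpleGraph (Fin r'))) →
      ∀ a b : Fin n, a ≠ b → a ∈ e ⁻¹' (T v H) → b ∈ e ⁻¹' (T v H) → G'.Adj a b := by
    intro v H hH a b hne ha hb
    obtain ⟨φ⟩ := hH
    have hJadj : J.Adj (e a) (e b) := by
      have hea : e a ∈ T v H := ha
      have heb : e b ∈ T v H := hb
      have heab : e a ≠ e b := fun h => hne (e.injective h)
      rcases hea with hea | ⟨b₁, hb₁, hea⟩ <;> rcases heb with heb | ⟨b₂, hb₂, heb⟩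
      · exact absurd (hea.trans heb.symm) heab
      · rw [hea, ← heb]; trivial
      · rw [← hea, heb]; trivial
      · rw [← hea, ← heb]
        rw [← hea, ← heb] at heab
        have hne' : b₁ ≠ b₂ := fun h => heab (by rw [h])
        have : H.Adj b₁ b₂ := (complete_subgraph_adj φ b₁ b₂).mpr ⟨hne', hb₁, hb₂⟩
        exact (joinGraph_adj_inr_inr).mpr (H.adj_sub this)
    exact hJadj
  set mk : (v : Fin m) → (H : G₀.Subgraph) →
      Nonempty (H.coe ≃g (⊤ : SimpleGraph (Fin r'))) → G'.Subgraph :=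
    fun v H hH =>
      { verts := e ⁻¹' (T v H)
        Adj := fun a b => a ≠ b ∧ a ∈ e ⁻¹' (T v H) ∧ b ∈ e ⁻¹' (T v H)
        adj_sub := fun ⟨h1, h2, h3⟩ => hadj_sub _ _ hH _ _ h1 h2 h3
        edge_vert := fun ⟨_, h2, _⟩ => h2
        symm := ⟨fun a b ⟨h1, h2, h3⟩ => ⟨h1.symm, h3, h2⟩⟩ } with hmk
  have hiso : ∀ v H hH, Nonempty ((mk v H hH).coe ≃g (⊤ : SimpleGraph (Fin (r' + 1)))) := by
    intro v H hH
    obtain ⟨φ⟩ := hH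
    have χ : ↥(e ⁻¹' (T v H)) ≃ Fin (r' + 1) := by
      refine ((Equiv.image e _).trans (Equiv.setCongr
        (by rw [Set.image_preimage_eq _ e.surjective]))).trans ?_
      refine ((Equiv.Set.union (s := {Sum.inl v}) (t := Sum.inr '' H.verts) ?_).trans ?_)
      · rw [Set.disjoint_iff]; rintro x ⟨hx1, b, _, hx2⟩
        rw [Set.mem_singleton_iff] at hx1; rw [hx1] at hx2; exact (Sum.inl_ne_inr hx2.symm).elim
      · refine (Equiv.sumCongr (Equiv.Set.singleton _)
          (((Equiv.Set.image Sum.inr H.verts Sum.inr_injective).symm.trans φ.toEquiv))).trans ?_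
        refine (Equiv.sumComm _ _).trans ?_
        exact (Equiv.sumCongr (Equiv.refl (Fin r'))
          (Equiv.ofUnique PUnit.{1} (Fin 1))).trans finSumFinEquiv
    refine ⟨⟨χ, ?_⟩⟩
    intro a b
    simp only [top_adj, hmk, SimpleGraph.Subgraph.coe_adj]
    constructor
    · intro h
      exact ⟨fun hab => h (congrArg χ (Subtype.ext hab)), a.2, b.2⟩
    · rintro ⟨h1, -, -⟩ h
      exact h1 (congrArg Subtype.val (χ.injective h))
  set Φ : Fin m × {H : G₀.Subgraph // Nonempty (H.coe ≃g (⊤ : SimpleGraph (Fin r')))} →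
      {H' : G'.Subgraph // Nonempty (H'.coe ≃g (⊤ : SimpleGraph (Fin (r' + 1))))} :=
    fun p => ⟨mk p.1 p.2.1 p.2.2, hiso p.1 p.2.1 p.2.2⟩ with hΦ
  have hΦinj : Function.Injective Φ := by
    rintro ⟨v₁, H₁, h₁⟩ ⟨v₂, H₂, h₂⟩ h
    have hsub : mk v₁ H₁ h₁ = mk v₂ H₂ h₂ := congrArg Subtype.val h
    have hverts : e ⁻¹' (T v₁ H₁) = e ⁻¹' (T v₂ H₂) := congrArg SimpleGraph.Subgraph.verts hsub
    have hTeq : T v₁ H₁ = T v₂ H₂ := by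
      have := congrArg (Set.image e) hverts
      rwa [Set.image_preimage_eq _ e.surjective, Set.image_preimage_eq _ e.surjective] at this
    have hv : v₁ = v₂ := by
      have := (hmemTl v₂ H₂ v₁).mp (hTeq ▸ (hmemTl v₁ H₁ v₁).mpr rfl)
      exact this
    have hV : H₁.verts = H₂.verts := by
      ext b
      rw [← hmemT v₁ H₁ b, ← hmemT v₂ H₂ b, hTeq]
    have hHeq : H₁ = H₂ := by
      obtain ⟨φ₁⟩ := h₁; obtain ⟨φ₂⟩ := h₂
      refine SimpleGraph.Subgraph.ext hV ?_
      ext a b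
      rw [complete_subgraph_adj φ₁, complete_subgraph_adj φ₂, hV]
    subst hv; subst hHeq; rfl
  have hcard := Nat.card_le_card_of_injective Φ hΦinj
  rwa [Nat.card_prod, Nat.card_eq_fintype_card, Fintype.card_fin] at hcard

/-- Proposition 1.2: for `r ≥ 3` and positive integers `s_1 ≤ ⋯ ≤ s_r`,
`ex(n, K_r, K_{s_1,…,s_r}) ≥ ⌊n/2⌋ ⬝ ex(⌈n/2⌉, K_{r-1}, K_{s_1,…,s_{r-1}})`. -/
theorem exGen_multipartite_lower (r : ℕ) (hr : 3 ≤ r) (s : Fin r → ℕ)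
    (hpos : ∀ i, 1 ≤ s i) (hmono : Monotone s) (n : ℕ) :
    (n / 2) * exGen ((n + 1) / 2) (⊤ : SimpleGraph (Fin (r - 1)))
        (multipartite (r - 1) fun i => s (i.castLE (Nat.sub_le r 1))) ≤
      exGen n (⊤ : SimpleGraph (Fin r)) (multipartite r s) := by
  set m := n / 2 with hm
  set k := (n + 1) / 2 with hk
  have hbotfree : _root_.Free (multipartite (r - 1) fun i => s (i.castLE (Nat.sub_le r 1)))
      (⊥ : SimpleGraph (Fin k)) := by
    rintro ⟨f, hf⟩
    refine hf ⟨⟨0, by omega⟩, ⟨0, hpos _⟩⟩ ⟨⟨1, by omega⟩, ⟨0, hpos _⟩⟩ ?_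
    rw [multipartite_adj]
    intro h
    rw [Fin.ext_iff] at h
    simp at h
  obtain ⟨G₀, hG₀free, hG₀count⟩ :=
    exGen_mem (F := (⊤ : SimpleGraph (Fin (r - 1)))) ⟨⊥, hbotfree⟩
  have e : Fin n ≃ (Fin m ⊕ Fin k) :=
    (finCongr (by omega : n = m + k)).trans finSumFinEquiv.symm
  have hfree : _root_.Free (multipartite r s)
      (SimpleGraph.comap e (joinGraph (⊥ : SimpleGraph (Fin m)) G₀)) :=
    free_comap _ _ e (free_join r hr s hmono G₀ hG₀free)
  calc m * exGen k (⊤ : SimpleGraph (Fin (r - 1)))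
        (multipartite (r - 1) fun i => s (i.castLE (Nat.sub_le r 1)))
      = m * _root_.copyCount (⊤ : SimpleGraph (Fin (r - 1))) G₀ := by rw [hG₀count]
    _ ≤ _root_.copyCount (⊤ : SimpleGraph (Fin r))
          (SimpleGraph.comap e (joinGraph (⊥ : SimpleGraph (Fin m)) G₀)) :=
        count_key r (r - 1) (by omega) G₀ e
    _ ≤ exGen n (⊤ : SimpleGraph (Fin r)) (multipartite r s) := copyCount_le_exGen hfree
end

section
/- Let G be a graph whose vertex set is partitioned into S_1 and S_2, where G[S_1] is K_{s_1,…,s_{r−1}}-free, all edges between S_1 and S_2 are present, and S_2 is an independent set. Assuming s_1 ≤ s_2 ≤ … ≤ s_r, the graph G contains no copy of K_{s_1,…,s_r}. -/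
open SimpleGraph Finset

lemma le_succAbove_nat {n : ℕ} (p : Fin (n + 1)) (i : Fin n) :
    (i : ℕ) ≤ (p.succAbove i : ℕ) := by
  unfold Fin.succAbove
  split <;> simp

/-- If the vertex set of `G` is partitioned into `S` and its complement, the induced
graph on `S` is `K_{s_1,…,s_{r-1}}`-free, all edges between `S` and its complement are
present, and the complement of `S` is independent, then (for `s_1 ≤ ⋯ ≤ s_r`) the graph
`G` contains no copy of `K_{s_1,…,s_r}`. -/
theorem free_of_partition {V : Type*} (G : SimpleGraph V) (S : Set V)
    (r : ℕ) (hr : 3 ≤ r) (s : Fin r → ℕ) (hpos : ∀ i, 1 ≤ s i) (hmono : Monotone s)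
    (hfree : _root_.Free (multipartite (r - 1) fun i => s (i.castLE (Nat.sub_le r 1)))
      (G.induce S))
    (hcomplete : ∀ a ∈ S, ∀ b ∉ S, G.Adj a b)
    (hind : ∀ a ∉ S, ∀ b ∉ S, ¬ G.Adj a b) :
    _root_.Free (multipartite r s) G := by
  rintro ⟨f, hf⟩
  obtain ⟨m, rfl⟩ : ∃ m, r = m + 1 := ⟨r - 1, by omega⟩
  -- at most one part of the copy meets the complement of S
  have hone : ∀ (i₁ i₂ : Fin (m + 1)) (k₁ : Fin (s i₁)) (k₂ : Fin (s i₂)),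
      i₁ ≠ i₂ → f ⟨i₁, k₁⟩ ∉ S → f ⟨i₂, k₂⟩ ∉ S → False := by
    intro i₁ i₂ k₁ k₂ hne h1 h2
    exact hind _ h1 _ h2 (hf ⟨i₁, k₁⟩ ⟨i₂, k₂⟩ hne)
  -- choose a "bad" part `j` such that all other parts land in S
  have hj : ∃ j : Fin (m + 1), ∀ (i : Fin (m + 1)) (k : Fin (s i)),
      i ≠ j → f ⟨i, k⟩ ∈ S := by
    by_cases hex : ∃ (i : Fin (m + 1)) (k : Fin (s i)), f ⟨i, k⟩ ∉ S
    · obtain ⟨j, kj, hjk⟩ := hex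
      refine ⟨j, fun i k hne => ?_⟩
      by_contra h
      exact hone i j k kj hne h hjk
    · push_neg at hex
      exact ⟨0, fun i k _ => hex i k⟩
  obtain ⟨j, hj⟩ := hj
  apply hfree
  have hsz : ∀ i : Fin m, s (i.castLE (Nat.sub_le (m + 1) 1)) ≤ s (j.succAbove i) := by
    intro i
    apply hmono
    rw [Fin.le_def]
    exact le_succAbove_nat j i
  refine ⟨⟨fun a => ⟨f ⟨j.succAbove a.1, ⟨a.2.1, lt_of_lt_of_le a.2.2 (hsz a.1)⟩⟩,
      hj _ _ (Fin.succAbove_ne j a.1)⟩, ?_⟩, ?_⟩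
  · rintro ⟨i₁, k₁⟩ ⟨i₂, k₂⟩ h
    simp only [Subtype.mk.injEq] at h
    have := f.injective h
    obtain ⟨h1, h2⟩ := Sigma.mk.inj_iff.mp this
    have hi : i₁ = i₂ := Fin.succAbove_right_injective h1
    subst hi
    have hk : k₁ = k₂ := by
      have := congrArg Fin.val (eq_of_heq h2)
      exact Fin.ext this
    rw [hk]
  · rintro ⟨i₁, k₁⟩ ⟨i₂, k₂⟩ hab
    have hne : j.succAbove i₁ ≠ j.succAbove i₂ :=
      fun h => hab (Fin.succAbove_right_injective h)
    exact hf _ _ hne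
end

section
/- Let a ≥ 1, s ≥ 1 be integers and f_1,…,f_a, N nonnegative reals with ∑_{i=1}^a f_i ≥ N and N ≥ 4sa. Let B = {i : f_i ≥ s}. Then ∑_{i ∈ B} (f_i − s + 1)^s ≥ N^s / (2^s · a^{s−1}). -/
open Finset

/-- The key averaging estimate: if `f 1, …, f a` and `N` are nonnegative reals with
`∑ f i ≥ N` and `N ≥ 4 s a`, and `B = {i : f i ≥ s}`, then
`∑_{i ∈ B} (f i - s + 1)^s ≥ N^s / (2^s a^(s-1))`. -/
theorem averaging_estimate (a s : ℕ) (ha : 1 ≤ a) (hs : 1 ≤ s)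
    (f : Fin a → ℝ) (hf : ∀ i, 0 ≤ f i) (N : ℝ) (hN : 0 ≤ N)
    (hsum : N ≤ ∑ i, f i) (hNbig : 4 * s * a ≤ N) :
    N ^ s / (2 ^ s * (a : ℝ) ^ (s - 1)) ≤
      ∑ i ∈ Finset.univ.filter (fun i => (s : ℝ) ≤ f i), (f i - s + 1) ^ s := by
  obtain ⟨n, rfl⟩ : ∃ n, s = n + 1 := ⟨s - 1, (Nat.succ_pred_eq_of_pos hs).symm⟩
  set s : ℕ := n + 1 with hsdef
  set B := Finset.univ.filter (fun i : Fin a => (s : ℝ) ≤ f i) with hB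
  have ha' : (1 : ℝ) ≤ a := by exact_mod_cast ha
  have hs' : (1 : ℝ) ≤ s := by exact_mod_cast hs
  have hNpos : (0 : ℝ) < N := lt_of_lt_of_le (by nlinarith) hNbig
  have hcardB : (B.card : ℝ) ≤ a := by
    exact_mod_cast (card_filter_le _ _).trans (by simp)
  have hgnn : ∀ i ∈ B, (0 : ℝ) ≤ f i - s + 1 := by
    intro i hi
    simp only [hB, mem_filter] at hi
    linarith [hi.2]
  -- Sum over complement is small
  have hcompl : ∑ i ∈ Bᶜ, f i ≤ s * a := by
    calc ∑ i ∈ Bᶜ, f i ≤ ∑ _i ∈ Bᶜ, (s : ℝ) := by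
          refine sum_le_sum fun i hi => ?_
          simp only [hB, mem_compl, mem_filter, mem_univ, true_and, not_le] at hi
          linarith
      _ = Bᶜ.card * s := by rw [sum_const, nsmul_eq_mul]
      _ ≤ a * s := by
          have : (Bᶜ.card : ℝ) ≤ a := by
            exact_mod_cast (card_le_card (subset_univ _)).trans (by simp)
          nlinarith [hs'.trans_lt' one_pos]
      _ = s * a := by ring
  have hsplit : N - s * a ≤ ∑ i ∈ B, f i := by
    have h := Finset.sum_add_sum_compl B f
    linarith
  have hsumg : N / 2 ≤ ∑ i ∈ B, (f i - s + 1) := by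
    have h1 : ∑ i ∈ B, (f i - s + 1) = (∑ i ∈ B, f i) - s * B.card + B.card := by
      rw [sum_add_distrib, sum_sub_distrib, sum_const, sum_const, nsmul_eq_mul, nsmul_eq_mul]
      ring
    have hc : (0 : ℝ) ≤ B.card := Nat.cast_nonneg _
    have hNb : 4 * (s : ℝ) * a ≤ N := by exact_mod_cast hNbig
    nlinarith
  have hBne : (1 : ℝ) ≤ B.card := by
    by_contra h
    push_neg at h
    have : B.card = 0 := by exact_mod_cast Nat.lt_one_iff.mp (by exact_mod_cast h)
    rw [card_eq_zero] at this
    rw [this] at hsumg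
    simp at hsumg
    linarith
  have hpm := pow_sum_div_card_le_sum_pow hgnn n
  have key : (N / 2) ^ s / (a : ℝ) ^ n ≤ ∑ i ∈ B, (f i - s + 1) ^ s := by
    refine le_trans ?_ hpm
    have hcpos : (0 : ℝ) < (B.card : ℝ) ^ n := by positivity
    have hsum0 : N / 2 ≤ ∑ i ∈ B, (f i - s + 1) := hsumg
    have h1 : (N / 2) ^ s ≤ (∑ i ∈ B, (f i - s + 1)) ^ s :=
      pow_le_pow_left₀ (by linarith) hsum0 s
    have h2 : ((B.card : ℝ)) ^ n ≤ (a : ℝ) ^ n := pow_le_pow_left₀ (by positivity) hcardB n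
    calc (N / 2) ^ s / (a : ℝ) ^ n ≤ (∑ i ∈ B, (f i - s + 1)) ^ s / (a : ℝ) ^ n := by
          apply div_le_div_of_nonneg_right h1 (by positivity) |>.trans_eq rfl
      _ ≤ (∑ i ∈ B, (f i - s + 1)) ^ s / ((B.card : ℝ)) ^ n := by
          exact div_le_div_of_nonneg_left (pow_nonneg (le_trans (by positivity) hsumg) s) hcpos h2
  have heq : N ^ s / (2 ^ s * (a : ℝ) ^ (s - 1)) = (N / 2) ^ s / (a : ℝ) ^ n := by
    rw [div_pow]
    have : s - 1 = n := rfl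
    rw [this]
    ring
  rw [heq]
  exact key
end

section
/- For every r ≥ 4, ex(n, K_{r+1}, K_{1,…,1,2,2}) ≤ ex(n, K_r, K_{1,…,1,2,2}), where K_{1,…,1,2,2} denotes the complete r-partite graph with r−2 parts of size 1 and two parts of size 2; in a graph free of this K_{1,…,1,2,2}, every copy of K_r lies in at most one copy of K_{r+1}. -/
open SimpleGraph Finset

section Aux

variable {V : Type*} {G : SimpleGraph V} {k : ℕ}

lemma aux_adj_char (H' : G.Subgraph) (e : H'.coe ≃g (⊤ : SimpleGraph (Fin k)))
    {a b : V} : H'.Adj a b ↔ a ∈ H'.verts ∧ b ∈ H'.verts ∧ a ≠ b := by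
  constructor
  · exact fun h => ⟨H'.edge_vert h, H'.edge_vert h.symm, (H'.adj_sub h).ne⟩
  · rintro ⟨ha, hb, hab⟩
    have h2 : (⊤ : SimpleGraph (Fin k)).Adj (e ⟨a, ha⟩) (e ⟨b, hb⟩) := by
      simp only [top_adj, ne_eq]
      intro h
      exact hab (congrArg Subtype.val (e.toEquiv.injective h))
    have := e.map_rel_iff.mp h2
    simpa using this

lemma aux_finite_subgraph [Finite V] (G : SimpleGraph V) : Finite G.Subgraph := by
  classical
  apply Finite.of_injective (fun H : G.Subgraph => (H.verts, H.Adj))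
  intro H1 H2 h
  obtain ⟨h1, h2⟩ := Prod.mk.injEq .. ▸ h
  exact SimpleGraph.Subgraph.ext h1 h2

/-- The complete subgraph on a clique. -/
def subOfClique {S : Finset V} (hS : G.IsNClique k S) : G.Subgraph where
  verts := ↑S
  Adj a b := a ∈ S ∧ b ∈ S ∧ a ≠ b
  adj_sub := fun ⟨ha, hb, hab⟩ => hS.isClique (Finset.mem_coe.mpr ha) (Finset.mem_coe.mpr hb) hab
  edge_vert := fun ⟨ha, _, _⟩ => Finset.mem_coe.mpr ha
  symm := ⟨fun a b ⟨ha, hb, h⟩ => ⟨hb, ha, h.symm⟩⟩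

noncomputable def isoOfClique {S : Finset V} (hS : G.IsNClique k S) :
    (subOfClique hS).coe ≃g (⊤ : SimpleGraph (Fin k)) := by
  have hcoe : (subOfClique hS).coe = ⊤ := by
    ext a b
    simp only [Subgraph.coe_adj, top_adj]
    show (↑a ∈ S ∧ ↑b ∈ S ∧ (a : V) ≠ ↑b) ↔ a ≠ b
    constructor
    · rintro ⟨-, -, h⟩ hc
      exact h (congrArg Subtype.val hc)
    · intro h
      exact ⟨a.2, b.2, fun hc => h (Subtype.ext hc)⟩
  rw [hcoe]
  exact Iso.completeGraph ((Equiv.subtypeEquivRight (fun x => Iff.rfl)).trans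
    (S.equivFinOfCardEq hS.card_eq))

lemma copyCount_top_eq [Fintype V] (k : ℕ) (G : SimpleGraph V) :
    _root_.copyCount (⊤ : SimpleGraph (Fin k)) G = Nat.card {S : Finset V // G.IsNClique k S} := by
  classical
  haveI : Finite G.Subgraph := aux_finite_subgraph G
  have key : ∀ p : {H : G.Subgraph // Nonempty (H.coe ≃g (⊤ : SimpleGraph (Fin k)))},
      ∃ S : Finset V, ↑S = p.1.verts ∧ G.IsNClique k S := by
    rintro ⟨H', ⟨e⟩⟩
    haveI : Finite H'.verts := Finite.intro e.toEquiv
    have hfin : H'.verts.Finite := Set.toFinite _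
    refine ⟨hfin.toFinset, hfin.coe_toFinset, ?_, ?_⟩
    · intro a ha b hb hab
      rw [Finset.mem_coe, hfin.mem_toFinset] at ha hb
      exact H'.adj_sub ((aux_adj_char H' e).mpr ⟨ha, hb, hab⟩)
    · have e2 : (hfin.toFinset : Finset V) ≃ Fin k :=
        ((Equiv.subtypeEquivRight (fun x => by simp)).trans
          (Equiv.setCongr hfin.coe_toFinset)).trans e.toEquiv
      exact Finset.card_eq_of_equiv_fin e2
  apply le_antisymm
  · apply Nat.card_le_card_of_injective (fun p => (⟨(key p).choose, (key p).choose_spec.2⟩ :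
      {S : Finset V // G.IsNClique k S}))
    rintro ⟨H1, h1⟩ ⟨H2, h2⟩ h
    have hv : H1.verts = H2.verts := by
      rw [← (key ⟨H1, h1⟩).choose_spec.1, ← (key ⟨H2, h2⟩).choose_spec.1]
      exact congrArg _ (congrArg Subtype.val h)
    obtain ⟨e1⟩ := h1
    obtain ⟨e2⟩ := h2
    refine Subtype.ext (SimpleGraph.Subgraph.ext hv ?_)
    ext a b
    rw [aux_adj_char H1 e1, aux_adj_char H2 e2, hv]
  · apply Nat.card_le_card_of_injective
      (fun p => (⟨subOfClique p.2, ⟨isoOfClique p.2⟩⟩ :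
        {H : G.Subgraph // Nonempty (H.coe ≃g (⊤ : SimpleGraph (Fin k)))}))
    rintro ⟨S1, h1⟩ ⟨S2, h2⟩ h
    have : (↑S1 : Set V) = ↑S2 := congrArg Subgraph.verts (congrArg Subtype.val h)
    exact Subtype.ext (Finset.coe_injective this)

end Aux

lemma aux_subsingleton (r : ℕ) (hr : 4 ≤ r) {V : Type*} (G : SimpleGraph V)
    (hf : _root_.Free (multipartite r fun i => if (i : ℕ) < r - 2 then 1 else 2) G)
    (T : Finset V) (hT : G.IsNClique r T) :
    {S : Finset V | G.IsNClique (r + 1) S ∧ T ⊆ S}.Subsingleton := by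
  classical
  intro S1 h1 S2 h2
  by_contra hne
  obtain ⟨hc1, hsub1⟩ := h1
  obtain ⟨hc2, hsub2⟩ := h2
  -- extract the extra vertices
  have hex : ∀ S : Finset V, G.IsNClique (r + 1) S → T ⊆ S →
      ∃ u, u ∉ T ∧ S = insert u T := by
    intro S hS hsub
    have hcard : (S \ T).Nonempty := by
      rw [← Finset.card_pos, Finset.card_sdiff_of_subset hsub, hS.card_eq, hT.card_eq]
      omega
    obtain ⟨u, hu⟩ := hcard
    rw [Finset.mem_sdiff] at hu
    refine ⟨u, hu.2, (Finset.eq_of_subset_of_card_le (Finset.insert_subset hu.1 hsub) ?_).symm⟩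
    rw [hS.card_eq, Finset.card_insert_of_notMem hu.2, hT.card_eq]
  obtain ⟨u, huT, hS1⟩ := hex S1 hc1 hsub1
  obtain ⟨w, hwT, hS2⟩ := hex S2 hc2 hsub2
  have huw : u ≠ w := by
    intro h
    exact hne (by rw [hS1, hS2, h])
  have hadju : ∀ t ∈ T, G.Adj u t := by
    intro t ht
    exact hc1.isClique (by rw [hS1]; exact Finset.mem_coe.mpr (Finset.mem_insert_self u T))
      (by rw [hS1]; exact Finset.mem_coe.mpr (Finset.mem_insert_of_mem ht))
      (fun h => huT (h ▸ ht))
  have hadjw : ∀ t ∈ T, G.Adj w t := by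
    intro t ht
    exact hc2.isClique (by rw [hS2]; exact Finset.mem_coe.mpr (Finset.mem_insert_self w T))
      (by rw [hS2]; exact Finset.mem_coe.mpr (Finset.mem_insert_of_mem ht))
      (fun h => hwT (h ▸ ht))
  -- enumerate T
  set gE := (T.equivFinOfCardEq hT.card_eq).symm with hgE
  set gv : Fin r → V := fun i => ↑(gE i) with hgv
  have hgvT : ∀ i, gv i ∈ T := fun i => (gE i).2
  have hgvinj : Function.Injective gv := fun i j h =>
    gE.injective (Subtype.ext h)
  -- the embedding
  set f : (Σ i : Fin r, Fin (if (i : ℕ) < r - 2 then 1 else 2)) → V :=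
    fun x => if (x.1 : ℕ) = r - 2 then (if (x.2 : ℕ) = 0 then u else w)
      else if (x.1 : ℕ) = r - 1 then
        (if (x.2 : ℕ) = 0 then gv ⟨r - 2, by omega⟩ else gv ⟨r - 1, by omega⟩)
      else gv x.1 with hf_def
  have hmemT : ∀ x : (Σ i : Fin r, Fin (if (i : ℕ) < r - 2 then 1 else 2)),
      (x.1 : ℕ) ≠ r - 2 → f x ∈ T := by
    intro x hx
    by_cases h3 : (x.1 : ℕ) = r - 1
    · by_cases h4 : (x.2 : ℕ) = 0
      · simp only [hf_def, if_neg hx, if_pos h3, if_pos h4]; exact hgvT _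
      · simp only [hf_def, if_neg hx, if_pos h3, if_neg h4]; exact hgvT _
    · simp only [hf_def, if_neg hx, if_neg h3]; exact hgvT _
  have huworfx : ∀ x : (Σ i : Fin r, Fin (if (i : ℕ) < r - 2 then 1 else 2)),
      (x.1 : ℕ) = r - 2 → f x = u ∨ f x = w := by
    intro x hx
    by_cases h4 : (x.2 : ℕ) = 0
    · simp only [hf_def, if_pos hx, if_pos h4]; exact Or.inl (by trivial)
    · simp only [hf_def, if_pos hx, if_neg h4]; exact Or.inr (by trivial)
  have hj2 : ∀ (a : Fin r) (b : Fin (if (a : ℕ) < r - 2 then 1 else 2)),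
      (b : ℕ) < 2 := by
    intro a b
    refine lt_of_lt_of_le b.isLt ?_
    by_cases hc : (a : ℕ) < r - 2
    · rw [if_pos hc]; omega
    · rw [if_neg hc]
  have hfval : ∀ x : (Σ i : Fin r, Fin (if (i : ℕ) < r - 2 then 1 else 2)),
      (x.1 : ℕ) < r - 2 → f x = gv x.1 := by
    intro x hx
    simp only [hf_def]
    rw [if_neg (by omega), if_neg (by omega)]
  -- injectivity
  have hfinj : Function.Injective f := by
    rintro ⟨i, j⟩ ⟨i', j'⟩ hxy
    have hii' : i = i' := by
      by_cases h1 : (i : ℕ) = r - 2 <;> by_cases h2 : (i' : ℕ) = r - 2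
      · exact Fin.ext (h1.trans h2.symm)
      · exfalso
        have hyT := hmemT ⟨i', j'⟩ h2
        rcases huworfx ⟨i, j⟩ h1 with h | h
        · exact huT (by rw [← h, hxy]; exact hyT)
        · exact hwT (by rw [← h, hxy]; exact hyT)
      · exfalso
        have hxT := hmemT ⟨i, j⟩ h1
        rcases huworfx ⟨i', j'⟩ h2 with h | h
        · exact huT (by rw [← h, ← hxy]; exact hxT)
        · exact hwT (by rw [← h, ← hxy]; exact hxT)
      · by_cases h3 : (i : ℕ) = r - 1 <;> by_cases h4 : (i' : ℕ) = r - 1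
        · exact Fin.ext (h3.trans h4.symm)
        · exfalso
          have hlt : (i' : ℕ) < r - 2 := by have := i'.isLt; omega
          have hx : f ⟨i, j⟩ = gv ⟨r - 2, by omega⟩ ∨ f ⟨i, j⟩ = gv ⟨r - 1, by omega⟩ := by
            by_cases h5 : ((j : ℕ)) = 0
            · simp only [hf_def, if_neg h1, if_pos h3, if_pos h5]; exact Or.inl (by trivial)
            · simp only [hf_def, if_neg h1, if_pos h3, if_neg h5]; exact Or.inr (by trivial)
          have hy : f ⟨i', j'⟩ = gv i' := hfval ⟨i', j'⟩ hlt
          rcases hx with h | h <;>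
          · have heq := hgvinj (show gv _ = gv i' by rw [← h, ← hy]; exact hxy)
            have := congrArg Fin.val heq
            simp only [Fin.val_mk] at this
            omega
        · exfalso
          have hlt : (i : ℕ) < r - 2 := by have := i.isLt; omega
          have hy : f ⟨i', j'⟩ = gv ⟨r - 2, by omega⟩ ∨ f ⟨i', j'⟩ = gv ⟨r - 1, by omega⟩ := by
            by_cases h5 : ((j' : ℕ)) = 0
            · simp only [hf_def, if_neg h2, if_pos h4, if_pos h5]; exact Or.inl (by trivial)
            · simp only [hf_def, if_neg h2, if_pos h4, if_neg h5]; exact Or.inr (by trivial)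
          have hx : f ⟨i, j⟩ = gv i := hfval ⟨i, j⟩ hlt
          rcases hy with h | h <;>
          · have heq := hgvinj (show gv i = gv _ by rw [← h, ← hx]; exact hxy)
            have := congrArg Fin.val heq
            simp only [Fin.val_mk] at this
            omega
        · have hlt : (i : ℕ) < r - 2 := by have := i.isLt; omega
          have hlt' : (i' : ℕ) < r - 2 := by have := i'.isLt; omega
          exact hgvinj (show gv i = gv i' by
            rw [← hfval ⟨i, j⟩ hlt, ← hfval ⟨i', j'⟩ hlt']; exact hxy)
    subst hii'
    have hjj' : (j : ℕ) = (j' : ℕ) := by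
      by_cases h1 : (i : ℕ) = r - 2
      · simp only [hf_def, if_pos h1] at hxy
        by_cases hj : (j : ℕ) = 0 <;> by_cases hj' : (j' : ℕ) = 0
        · omega
        · rw [if_pos hj, if_neg hj'] at hxy; exact absurd hxy huw
        · rw [if_neg hj, if_pos hj'] at hxy; exact absurd hxy.symm huw
        · have := hj2 i j; have := hj2 i j'; omega
      · by_cases h3 : (i : ℕ) = r - 1
        · simp only [hf_def, if_neg h1, if_pos h3] at hxy
          by_cases hj : (j : ℕ) = 0 <;> by_cases hj' : (j' : ℕ) = 0
          · omega
          · rw [if_pos hj, if_neg hj'] at hxy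
            have := congrArg Fin.val (hgvinj hxy); simp at this; omega
          · rw [if_neg hj, if_pos hj'] at hxy
            have := congrArg Fin.val (hgvinj hxy); simp at this; omega
          · have := hj2 i j; have := hj2 i j'; omega
        · have hlt : (i : ℕ) < r - 2 := by have := i.isLt; omega
          have hb1 : (j : ℕ) < 1 := lt_of_lt_of_le j.isLt (by rw [if_pos hlt])
          have hb2 : (j' : ℕ) < 1 := lt_of_lt_of_le j'.isLt (by rw [if_pos hlt])
          omega
    exact congrArg (Sigma.mk i) (Fin.ext hjj')
  -- adjacency
  apply hf
  refine ⟨⟨f, hfinj⟩, ?_⟩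
  intro a b hab
  have hab1 : a.1 ≠ b.1 := by
    simpa [multipartite, top_adj] using hab
  simp only [Function.Embedding.coeFn_mk]
  by_cases h1 : (a.1 : ℕ) = r - 2
  · have h2 : (b.1 : ℕ) ≠ r - 2 := fun h => hab1 (Fin.ext (h1.trans h.symm))
    have hbT := hmemT b h2
    rcases huworfx a h1 with h | h <;> rw [h]
    · exact hadju _ hbT
    · exact hadjw _ hbT
  · by_cases h2 : (b.1 : ℕ) = r - 2
    · have haT := hmemT a h1
      rcases huworfx b h2 with h | h <;> rw [h]
      · exact (hadju _ haT).symm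
      · exact (hadjw _ haT).symm
    · have haT := hmemT a h1
      have hbT := hmemT b h2
      have hne' : f a ≠ f b := fun h => hab1 (congrArg Sigma.fst (hfinj h))
      exact hT.isClique (Finset.mem_coe.mpr haT) (Finset.mem_coe.mpr hbT) hne'

/-- For `r ≥ 4`, with `K_{1,…,1,2,2}` the complete `r`-partite graph with `r - 2`
singleton parts and two parts of size `2`:
`ex(n, K_{r+1}, K_{1,…,1,2,2}) ≤ ex(n, K_r, K_{1,…,1,2,2})`, and in a
`K_{1,…,1,2,2}`-free graph every copy of `K_r` lies in at most one copy of `K_{r+1}`. -/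
theorem exGen_k1122_step (r n : ℕ) (hr : 4 ≤ r) :
    exGen n (⊤ : SimpleGraph (Fin (r + 1)))
        (multipartite r fun i => if (i : ℕ) < r - 2 then 1 else 2) ≤
      exGen n (⊤ : SimpleGraph (Fin r))
        (multipartite r fun i => if (i : ℕ) < r - 2 then 1 else 2) ∧
    ∀ (V : Type) (G : SimpleGraph V),
      _root_.Free (multipartite r fun i => if (i : ℕ) < r - 2 then 1 else 2) G →
        ∀ T : Finset V, G.IsNClique r T →
          {S : Finset V | G.IsNClique (r + 1) S ∧ T ⊆ S}.Subsingleton := by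
  classical
  refine ⟨?_, fun V G hf T hT => aux_subsingleton r hr G hf T hT⟩
  set H := multipartite r fun i => if (i : ℕ) < r - 2 then 1 else 2 with hH
  -- the free bottom graph: the target set is nonempty
  have hfree_bot : _root_.Free H (⊥ : SimpleGraph (Fin n)) := by
    rintro ⟨f, hf⟩
    have h1 : r - 2 < r := by omega
    have h2 : r - 1 < r := by omega
    have hadj : H.Adj ⟨⟨r - 2, h1⟩, ⟨0, by split <;> omega⟩⟩ ⟨⟨r - 1, h2⟩, ⟨0, by split <;> omega⟩⟩ := by
      simp [hH, multipartite, top_adj]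
      intro h
      omega
    exact (hf _ _ hadj).elim
  -- boundedness
  have hbdd : BddAbove {N | ∃ G : SimpleGraph (Fin n), _root_.Free H G ∧
      _root_.copyCount (⊤ : SimpleGraph (Fin r)) G = N} := by
    refine ⟨Nat.card (Finset (Fin n)), ?_⟩
    rintro N ⟨G, _, rfl⟩
    rw [copyCount_top_eq]
    exact Nat.card_le_card_of_injective Subtype.val Subtype.val_injective
  apply csSup_le
  · exact ⟨_root_.copyCount (⊤ : SimpleGraph (Fin (r + 1))) (⊥ : SimpleGraph (Fin n)),
      ⊥, hfree_bot, rfl⟩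
  rintro N ⟨G, hG, rfl⟩
  have hstep : _root_.copyCount (⊤ : SimpleGraph (Fin (r + 1))) G ≤
      _root_.copyCount (⊤ : SimpleGraph (Fin r)) G := by
    rw [copyCount_top_eq, copyCount_top_eq]
    have hmap : ∀ p : {S : Finset (Fin n) // G.IsNClique (r + 1) S},
        G.IsNClique r (p.1.erase (p.1.max' (by
          rw [← Finset.card_pos, p.2.card_eq]; omega))) := by
      rintro ⟨S, hS⟩
      refine ⟨hS.isClique.subset ?_, ?_⟩
      · exact_mod_cast Finset.erase_subset _ _
      · rw [Finset.card_erase_of_mem (Finset.max'_mem _ _), hS.card_eq]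
        omega
    apply Nat.card_le_card_of_injective
      (fun p => (⟨_, hmap p⟩ : {S : Finset (Fin n) // G.IsNClique r S}))
    rintro ⟨S1, h1⟩ ⟨S2, h2⟩ h
    have hT := congrArg Subtype.val h
    simp only at hT
    set T := S1.erase (S1.max' _) with hTdef
    have hTclique : G.IsNClique r T := hmap ⟨S1, h1⟩
    have hsub1 : T ⊆ S1 := Finset.erase_subset _ _
    have hsub2 : T ⊆ S2 := by rw [hT]; exact Finset.erase_subset _ _
    have := aux_subsingleton r hr G hG T hTclique
      (Set.mem_setOf.mpr ⟨h1, hsub1⟩) (Set.mem_setOf.mpr ⟨h2, hsub2⟩)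
    exact Subtype.ext this
  calc _root_.copyCount (⊤ : SimpleGraph (Fin (r + 1))) G
      ≤ _root_.copyCount (⊤ : SimpleGraph (Fin r)) G := hstep
    _ ≤ _ := le_csSup hbdd ⟨G, hG, rfl⟩
end
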